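/- Let y > 0, H a probability distribution supported on [0, τ] with τ < ∞, and for z₁, z₂ ∈ ℂ⁺ let s₁ = s(z₁), s₂ = s(z₂) be the solutions of the self-consistent equation s = −(z − y∫ t(1+ts)^{-1} dH(t))^{-1}. Define a(z₁,z₂) = y s₁ s₂ ∫ t² / ((1 + t s₁)(1 + t s₂)) dH(t). Then |a(z₁,z₂)| ≤ ( A₁/(Im z₁ + A₁) )^{1/2} · ( A₂/(Im z₂ + A₂) )^{1/2} < 1, where A_i = Im s_i · y ∫ t²/|1 + t s_i|² dH(t). -/

import Mathlib

open MeasureTheory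


lemma aux_ne (s : ℂ) (hs : 0 < s.im) (t : ℝ) : (1 + (t : ℂ) * s) ≠ 0 := by
  intro h
  have him : ((1 : ℂ) + (t : ℂ) * s).im = 0 := by rw [h]; simp
  simp [Complex.add_im, Complex.mul_im] at him
  rcases him with h1 | h1
  · rw [h1] at h; simp at h
  · exact absurd h1 hs.ne'

lemma aux_key (y : ℝ) (hy : 0 < y) (H : Measure ℝ) [IsProbabilityMeasure H]
    (z s : ℂ) (hz : 0 < z.im) (hs : 0 < s.im)
    (hi : Integrable (fun t : ℝ => (t : ℂ) / (1 + (t : ℂ) * s)) H)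
    (heq : s = -(z - (y : ℂ) * ∫ t, (t : ℂ) / (1 + (t : ℂ) * s) ∂H)⁻¹) :
    z.im + s.im * (y * ∫ t, t ^ 2 / ‖(1 + (t : ℂ) * s)‖ ^ 2 ∂H)
      = s.im / Complex.normSq s := by
  set I : ℂ := ∫ t, (t : ℂ) / (1 + (t : ℂ) * s) ∂H with hI
  set w : ℂ := z - (y : ℂ) * I with hwdef
  have hsne : s ≠ 0 := by
    intro h; rw [h] at hs; simp at hs
  have hw : w = -s⁻¹ := by
    have h1 : w⁻¹ = -s := by
      rw [heq]; simp
    have := congrArg (·⁻¹) h1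
    simpa [inv_neg] using this
  have hpt : ∀ t : ℝ, ((t : ℂ) / (1 + (t : ℂ) * s)).im
      = -s.im * (t ^ 2 / ‖(1 + (t : ℂ) * s)‖ ^ 2) := by
    intro t
    rw [Complex.div_im, Complex.sq_norm]
    simp [Complex.mul_im, Complex.add_im, Complex.add_re, Complex.mul_re]
    ring
  have hIim : I.im = -s.im * ∫ t, t ^ 2 / ‖(1 + (t : ℂ) * s)‖ ^ 2 ∂H := by
    have h2 := (Complex.imCLM.integral_comp_comm hi).symm
    simp only [Complex.imCLM_apply] at h2
    rw [hI, h2]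
    simp_rw [hpt]
    rw [integral_const_mul]
  have hwim : w.im = z.im + s.im * (y * ∫ t, t ^ 2 / ‖(1 + (t : ℂ) * s)‖ ^ 2 ∂H) := by
    rw [hwdef]
    simp [Complex.sub_im, Complex.mul_im, hIim]
    ring
  have hwim2 : w.im = s.im / Complex.normSq s := by
    rw [hw]
    simp [Complex.inv_im]
    ring
  rw [← hwim, hwim2]

lemma aux_cs (H : Measure ℝ) [IsProbabilityMeasure H] (s₁ s₂ : ℂ)
    (hs₁ : 0 < s₁.im) (hs₂ : 0 < s₂.im)
    (hi₃ : Integrable (fun t : ℝ => t ^ 2 / ‖(1 + (t : ℂ) * s₁)‖ ^ 2) H)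
    (hi₄ : Integrable (fun t : ℝ => t ^ 2 / ‖(1 + (t : ℂ) * s₂)‖ ^ 2) H) :
    ‖(∫ t, (t : ℂ) ^ 2 / ((1 + (t : ℂ) * s₁) * (1 + (t : ℂ) * s₂)) ∂H)‖
      ≤ Real.sqrt (∫ t, t ^ 2 / ‖(1 + (t : ℂ) * s₁)‖ ^ 2 ∂H) *
        Real.sqrt (∫ t, t ^ 2 / ‖(1 + (t : ℂ) * s₂)‖ ^ 2 ∂H) := by
  set f : ℝ → ℝ := fun t => |t| / ‖(1 + (t : ℂ) * s₁)‖ with hf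
  set g : ℝ → ℝ := fun t => |t| / ‖(1 + (t : ℂ) * s₂)‖ with hg
  have hcontf : Continuous f := by
    apply Continuous.div continuous_abs
    · exact continuous_norm.comp (by continuity)
    · intro t
      simpa using (norm_ne_zero_iff.mpr (aux_ne s₁ hs₁ t))
  have hcontg : Continuous g := by
    apply Continuous.div continuous_abs
    · exact continuous_norm.comp (by continuity)
    · intro t
      simpa using (norm_ne_zero_iff.mpr (aux_ne s₂ hs₂ t))
  have hfsq : (fun t => f t ^ 2) = fun t : ℝ => t ^ 2 / ‖(1 + (t : ℂ) * s₁)‖ ^ 2 := by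
    funext t; rw [hf]; simp [div_pow, sq_abs]
  have hgsq : (fun t => g t ^ 2) = fun t : ℝ => t ^ 2 / ‖(1 + (t : ℂ) * s₂)‖ ^ 2 := by
    funext t; rw [hg]; simp [div_pow, sq_abs]
  have hmemf : MemLp f (ENNReal.ofReal 2) H := by
    rw [(by norm_num : ENNReal.ofReal 2 = 2)]
    exact (memLp_two_iff_integrable_sq hcontf.aestronglyMeasurable).2 (hfsq ▸ hi₃)
  have hmemg : MemLp g (ENNReal.ofReal 2) H := by
    rw [(by norm_num : ENNReal.ofReal 2 = 2)]
    exact (memLp_two_iff_integrable_sq hcontg.aestronglyMeasurable).2 (hgsq ▸ hi₄)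
  have hpq : Real.HolderConjugate 2 2 := Real.HolderConjugate.two_two
  have hCS := integral_mul_le_Lp_mul_Lq_of_nonneg hpq
    (Filter.Eventually.of_forall (fun t => by positivity))
    (Filter.Eventually.of_forall (fun t => by positivity)) hmemf hmemg
  have hnorm : ∀ t : ℝ,
      ‖((t : ℂ) ^ 2 / ((1 + (t : ℂ) * s₁) * (1 + (t : ℂ) * s₂)))‖ = f t * g t := by
    intro t
    rw [hf, hg]
    simp only [norm_div, norm_mul, norm_pow, Complex.norm_real, Real.norm_eq_abs]
    rw [div_mul_div_comm]
    ring
  calc ‖(∫ t, (t : ℂ) ^ 2 / ((1 + (t : ℂ) * s₁) * (1 + (t : ℂ) * s₂)) ∂H)‖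
      ≤ ∫ t, ‖((t : ℂ) ^ 2 / ((1 + (t : ℂ) * s₁) * (1 + (t : ℂ) * s₂)))‖ ∂H := by
        exact norm_integral_le_integral_norm _
    _ = ∫ t, f t * g t ∂H := by simp_rw [hnorm]
    _ ≤ (∫ t, f t ^ 2 ∂H) ^ (1 / 2 : ℝ) * (∫ t, g t ^ 2 ∂H) ^ (1 / 2 : ℝ) := by
        simpa only [show ((2:ℝ)) = ((2:ℕ):ℝ) by norm_num, Real.rpow_natCast] using hCS
    _ = _ := by
        rw [show (∫ t, f t ^ 2 ∂H) = ∫ t, t ^ 2 / ‖(1 + (t : ℂ) * s₁)‖ ^ 2 ∂H from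
            congrArg _ hfsq,
          show (∫ t, g t ^ 2 ∂H) = ∫ t, t ^ 2 / ‖(1 + (t : ℂ) * s₂)‖ ^ 2 ∂H from
            congrArg _ hgsq, ← Real.sqrt_eq_rpow, ← Real.sqrt_eq_rpow]


theorem stmt19 (y τ : ℝ) (hy : 0 < y) (hτ : 0 ≤ τ) (H : Measure ℝ)
    [IsProbabilityMeasure H]
    (hsupp₁ : H (Set.Iio 0) = 0) (hsupp₂ : H (Set.Ioi τ) = 0)
    (z₁ z₂ s₁ s₂ : ℂ) (hz₁ : 0 < z₁.im) (hz₂ : 0 < z₂.im)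
    (hs₁ : 0 < s₁.im) (hs₂ : 0 < s₂.im)
    (hi₁ : Integrable (fun t : ℝ => (t : ℂ) / (1 + (t : ℂ) * s₁)) H)
    (hi₂ : Integrable (fun t : ℝ => (t : ℂ) / (1 + (t : ℂ) * s₂)) H)
    (hi₃ : Integrable (fun t : ℝ => t ^ 2 / ‖(1 + (t : ℂ) * s₁)‖ ^ 2) H)
    (hi₄ : Integrable (fun t : ℝ => t ^ 2 / ‖(1 + (t : ℂ) * s₂)‖ ^ 2) H)
    (hi₅ : Integrable (fun t : ℝ =>
      ((t : ℂ) ^ 2 / ((1 + (t : ℂ) * s₁) * (1 + (t : ℂ) * s₂)))) H)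
    (heq₁ : s₁ = -(z₁ - (y : ℂ) * ∫ t, (t : ℂ) / (1 + (t : ℂ) * s₁) ∂H)⁻¹)
    (heq₂ : s₂ = -(z₂ - (y : ℂ) * ∫ t, (t : ℂ) / (1 + (t : ℂ) * s₂) ∂H)⁻¹)
    (A₁ A₂ : ℝ)
    (hA₁ : A₁ = s₁.im * (y * ∫ t, t ^ 2 / ‖(1 + (t : ℂ) * s₁)‖ ^ 2 ∂H))
    (hA₂ : A₂ = s₂.im * (y * ∫ t, t ^ 2 / ‖(1 + (t : ℂ) * s₂)‖ ^ 2 ∂H)) :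
    ‖((y : ℂ) * s₁ * s₂ *
        ∫ t, (t : ℂ) ^ 2 / ((1 + (t : ℂ) * s₁) * (1 + (t : ℂ) * s₂)) ∂H)‖ ≤
      Real.sqrt (A₁ / (z₁.im + A₁)) * Real.sqrt (A₂ / (z₂.im + A₂)) ∧
    Real.sqrt (A₁ / (z₁.im + A₁)) * Real.sqrt (A₂ / (z₂.im + A₂)) < 1 := by
  have hk₁ := aux_key y hy H z₁ s₁ hz₁ hs₁ hi₁ heq₁
  have hk₂ := aux_key y hy H z₂ s₂ hz₂ hs₂ hi₂ heq₂
  have hCS := aux_cs H s₁ s₂ hs₁ hs₂ hi₃ hi₄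
  set B₁ := ∫ t, t ^ 2 / ‖(1 + (t : ℂ) * s₁)‖ ^ 2 ∂H with hB₁
  set B₂ := ∫ t, t ^ 2 / ‖(1 + (t : ℂ) * s₂)‖ ^ 2 ∂H with hB₂
  have hB₁0 : 0 ≤ B₁ := integral_nonneg (fun t => by positivity)
  have hB₂0 : 0 ≤ B₂ := integral_nonneg (fun t => by positivity)
  have hsne₁ : s₁ ≠ 0 := by intro h; rw [h] at hs₁; simp at hs₁
  have hsne₂ : s₂ ≠ 0 := by intro h; rw [h] at hs₂; simp at hs₂
  have hnsq₁ : 0 < Complex.normSq s₁ := Complex.normSq_pos.2 hsne₁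
  have hnsq₂ : 0 < Complex.normSq s₂ := Complex.normSq_pos.2 hsne₂
  have hsum₁ : z₁.im + A₁ = s₁.im / Complex.normSq s₁ := by rw [hA₁]; exact hk₁
  have hsum₂ : z₂.im + A₂ = s₂.im / Complex.normSq s₂ := by rw [hA₂]; exact hk₂
  have hpos₁ : 0 < z₁.im + A₁ := hsum₁ ▸ div_pos hs₁ hnsq₁
  have hpos₂ : 0 < z₂.im + A₂ := hsum₂ ▸ div_pos hs₂ hnsq₂
  have hA₁0 : 0 ≤ A₁ := by rw [hA₁]; positivity
  have hA₂0 : 0 ≤ A₂ := by rw [hA₂]; positivity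
  have hfrac₁ : A₁ / (z₁.im + A₁) = y * Complex.normSq s₁ * B₁ := by
    rw [hsum₁, hA₁]
    field_simp
  have hfrac₂ : A₂ / (z₂.im + A₂) = y * Complex.normSq s₂ * B₂ := by
    rw [hsum₂, hA₂]
    field_simp
  have hsqrt₁ : Real.sqrt (A₁ / (z₁.im + A₁))
      = Real.sqrt y * ‖s₁‖ * Real.sqrt B₁ := by
    rw [hfrac₁, Real.sqrt_mul (by positivity), Real.sqrt_mul hy.le, ← Complex.norm_def,
      mul_assoc]
  have hsqrt₂ : Real.sqrt (A₂ / (z₂.im + A₂))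
      = Real.sqrt y * ‖s₂‖ * Real.sqrt B₂ := by
    rw [hfrac₂, Real.sqrt_mul (by positivity), Real.sqrt_mul hy.le, ← Complex.norm_def,
      mul_assoc]
  have habs : ‖((y : ℂ) * s₁ * s₂ *
        ∫ t, (t : ℂ) ^ 2 / ((1 + (t : ℂ) * s₁) * (1 + (t : ℂ) * s₂)) ∂H)‖
      = y * (‖s₁‖ * ‖s₂‖) * ‖
        (∫ t, (t : ℂ) ^ 2 / ((1 + (t : ℂ) * s₁) * (1 + (t : ℂ) * s₂)) ∂H)‖ := by
    rw [norm_mul, norm_mul, norm_mul, Complex.norm_real, Real.norm_of_nonneg hy.le]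
    ring
  constructor
  · rw [habs, hsqrt₁, hsqrt₂]
    have hyy : Real.sqrt y * Real.sqrt y = y := Real.mul_self_sqrt hy.le
    have hre : (Real.sqrt y * ‖s₁‖ * Real.sqrt B₁) *
        (Real.sqrt y * ‖s₂‖ * Real.sqrt B₂)
        = y * (‖s₁‖ * ‖s₂‖) * (Real.sqrt B₁ * Real.sqrt B₂) := by
      linear_combination (‖s₁‖ * ‖s₂‖ * Real.sqrt B₁ * Real.sqrt B₂) * hyy
    rw [hre]
    exact mul_le_mul_of_nonneg_left hCS (by positivity)
  · have h1 : Real.sqrt (A₁ / (z₁.im + A₁)) < 1 := by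
      rw [show (1 : ℝ) = Real.sqrt 1 by simp]
      exact Real.sqrt_lt_sqrt (by positivity) ((div_lt_one hpos₁).2 (by linarith))
    have h2 : Real.sqrt (A₂ / (z₂.im + A₂)) < 1 := by
      rw [show (1 : ℝ) = Real.sqrt 1 by simp]
      exact Real.sqrt_lt_sqrt (by positivity) ((div_lt_one hpos₂).2 (by linarith))
    exact lt_of_le_of_lt (mul_le_of_le_one_right (Real.sqrt_nonneg _) h2.le) h1
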